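/- Let α ∈ ℂ with 0 < Re(α) < 1, n ≥ 3, and j odd with 3 ≤ j ≤ n. Set θ = (j-1)π/n and define the vector v ∈ ℂⁿ by v_k = sin(kθ) - (1 - conj(α))·sin((k-1)θ) + conj(α)·sin((n-k)θ) for 1 ≤ k ≤ n. Then ‖v‖₂² = |1-α|²·(n/2)·g(θ), where g(θ) = 2 - 2cos(θ). -/

import Mathlib

open Real Finset Complex

lemma geom_zero_aux (z : ℂ) (n : ℕ) (hz : z ≠ 1) (hzn : z ^ n = 1) :
    ∑ k ∈ Finset.Icc 1 n, z ^ k = 0 := by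
  have h := geom_sum_eq hz n
  have h2 : ∑ k ∈ Finset.Icc 1 n, z ^ k = z * ∑ k ∈ Finset.range n, z ^ k := by
    rw [← Finset.Ico_add_one_right_eq_Icc, Finset.sum_Ico_eq_sum_range]
    simp only [Nat.add_sub_cancel, Nat.succ_sub_one, pow_add, pow_one, Finset.mul_sum]
  rw [h2, h, hzn]
  simp

lemma cos_sum_zero_aux (θ c : ℝ) (n : ℕ)
    (hz : Complex.exp (2 * θ * Complex.I) ≠ 1)
    (hzn : Complex.exp (2 * θ * Complex.I) ^ n = 1) :
    ∑ k ∈ Finset.Icc 1 n, Real.cos (k * (2 * θ) - c) = 0 := by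
  have h0 := geom_zero_aux _ n hz hzn
  have key : ∀ k : ℕ, Real.cos (k * (2 * θ) - c)
      = (Complex.exp ((-c : ℝ) * Complex.I) * Complex.exp (2 * θ * Complex.I) ^ k).re := by
    intro k
    rw [← Complex.exp_nat_mul, ← Complex.exp_add]
    have : ((-c : ℝ) : ℂ) * Complex.I + k * (2 * θ * Complex.I)
        = ((k * (2 * θ) - c : ℝ) : ℂ) * Complex.I := by push_cast; ring
    rw [this, Complex.exp_ofReal_mul_I_re]
  simp_rw [key]
  rw [← Complex.re_sum, ← Finset.mul_sum, h0, mul_zero, Complex.zero_re]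

lemma term_id_aux (a b : ℝ) :
    (Real.sin a - Real.sin b) ^ 2
      = (1 - Real.cos (a - b)) + Real.cos (a + b)
        - Real.cos (2 * a) / 2 - Real.cos (2 * b) / 2 := by
  rw [Real.cos_sub, Real.cos_add, Real.cos_two_mul, Real.cos_two_mul]
  nlinarith [Real.sin_sq_add_cos_sq a, Real.sin_sq_add_cos_sq b]

/-- Exact norm of the eigenvector for odd `j`: with `θ = (j-1)π/n`,
`‖v‖₂² = |1-α|²·(n/2)·g(θ)` where `g(θ) = 2 - 2 cos θ`. -/
theorem eigenvector_norm_odd (α : ℂ) (hα0 : 0 < α.re) (hα1 : α.re < 1)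
    (n : ℕ) (hn : 3 ≤ n) (j : ℕ) (hj3 : 3 ≤ j) (hjn : j ≤ n) (hjo : Odd j)
    (θ : ℝ) (hθ : θ = (j - 1) * π / n)
    (v : ℕ → ℂ)
    (hv : ∀ k : ℕ, 1 ≤ k → k ≤ n →
      v k = (Real.sin (k * θ) : ℂ)
            - (1 - (starRingEnd ℂ) α) * (Real.sin ((k - 1 : ℝ) * θ) : ℂ)
            + (starRingEnd ℂ) α * (Real.sin ((n - k : ℝ) * θ) : ℂ)) :
    ∑ k ∈ Finset.Icc 1 n, ‖v k‖ ^ 2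
      = ‖1 - α‖ ^ 2 * (n / 2) * (2 - 2 * Real.cos θ) := by
  have hnpos : (0 : ℝ) < n := by positivity
  have hn0 : (n : ℝ) ≠ 0 := ne_of_gt hnpos
  have hj1 : (1 : ℝ) ≤ (j : ℝ) := by
    have h1 : 1 ≤ j := by omega
    exact_mod_cast h1
  have hjm : ((j - 1 : ℕ) : ℝ) = (j : ℝ) - 1 := by
    have : 1 ≤ j := by omega
    push_cast [Nat.cast_sub this]; ring
  have hnθ : (n : ℝ) * θ = ((j : ℝ) - 1) * π := by
    rw [hθ]; field_simp
  -- θ bounds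
  have hθpos : 0 < θ := by
    rw [hθ]
    have : (0 : ℝ) < (j : ℝ) - 1 := by
      have : (3 : ℝ) ≤ (j : ℝ) := by exact_mod_cast hj3
      linarith
    positivity
  have hθlt : θ < π := by
    rw [hθ, div_lt_iff₀ hnpos]
    have hjr : (j : ℝ) ≤ (n : ℝ) := by exact_mod_cast hjn
    nlinarith [Real.pi_pos]
  -- z := exp(2θI)
  have hz1 : Complex.exp (2 * θ * Complex.I) ≠ 1 := by
    rw [Ne, Complex.exp_eq_one_iff]
    rintro ⟨m, hm⟩
    have hm' : (2 * θ : ℝ) = (m : ℝ) * (2 * π) := by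
      have h := congrArg Complex.im hm
      simpa using h
    have hθm : θ = (m : ℝ) * π := by linarith
    have hπ := Real.pi_pos
    have hm0 : (0 : ℝ) < (m : ℝ) := by
      by_contra h
      push_neg at h
      nlinarith
    have hm1 : (m : ℝ) < 1 := by
      by_contra h
      push_neg at h
      nlinarith
    have h2 : (0 : ℤ) < m := by exact_mod_cast hm0
    have h3 : (m : ℤ) < 1 := by exact_mod_cast hm1
    omega
  have hzn : Complex.exp (2 * θ * Complex.I) ^ n = 1 := by
    rw [← Complex.exp_nat_mul]
    have : (n : ℂ) * (2 * θ * Complex.I) = ((j - 1 : ℕ) : ℂ) * (2 * π * Complex.I) := by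
      have : (n : ℝ) * (2 * θ) = ((j - 1 : ℕ) : ℝ) * (2 * π) := by
        rw [hjm]; nlinarith [hnθ]
      have := congrArg (fun x : ℝ => (x : ℂ)) this
      push_cast at this ⊢
      ring_nf
      ring_nf at this
      linear_combination Complex.I * this
    rw [this, Complex.exp_nat_mul_two_pi_mul_I]
  -- sin((n-k)θ) = -sin(kθ)
  obtain ⟨l, hl⟩ := hjo
  have hsin : ∀ k : ℕ, Real.sin (((n : ℝ) - k) * θ) = -Real.sin (k * θ) := by
    intro k
    have h1 : ((n : ℝ) - k) * θ = (l : ℝ) * (2 * π) - k * θ := by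
      have : (j : ℝ) = 2 * l + 1 := by exact_mod_cast hl
      nlinarith [hnθ]
    rw [h1, Real.sin_sub]
    have hs : Real.sin ((l : ℝ) * (2 * π)) = 0 := by
      have : (l : ℝ) * (2 * π) = (2 * l : ℕ) * π := by push_cast; ring
      rw [this, Real.sin_nat_mul_pi]
    have hc : Real.cos ((l : ℝ) * (2 * π)) = 1 := Real.cos_nat_mul_two_pi l
    rw [hs, hc]; ring
  -- rewrite each term
  have habs : ∀ k ∈ Finset.Icc 1 n, ‖v k‖ ^ 2
      = ‖1 - α‖ ^ 2
        * (Real.sin (k * θ) - Real.sin (((k : ℝ) - 1) * θ)) ^ 2 := by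
    intro k hk
    rw [Finset.mem_Icc] at hk
    rw [hv k hk.1 hk.2, hsin k]
    have : (Real.sin (k * θ) : ℂ)
        - (1 - (starRingEnd ℂ) α) * (Real.sin (((k : ℝ) - 1) * θ) : ℂ)
        + (starRingEnd ℂ) α * ((-Real.sin (k * θ) : ℝ) : ℂ)
        = (1 - (starRingEnd ℂ) α)
          * ((Real.sin (k * θ) - Real.sin (((k : ℝ) - 1) * θ) : ℝ) : ℂ) := by
      push_cast; ring
    rw [this, norm_mul]
    have hconj : (1 : ℂ) - (starRingEnd ℂ) α = (starRingEnd ℂ) (1 - α) := by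
      rw [map_sub, map_one]
    rw [hconj, Complex.norm_conj, Complex.norm_real, Real.norm_eq_abs, mul_pow, _root_.sq_abs]
  rw [Finset.sum_congr rfl habs, ← Finset.mul_sum]
  -- the real sum
  have hterm : ∀ k : ℕ,
      (Real.sin (k * θ) - Real.sin (((k : ℝ) - 1) * θ)) ^ 2
        = (1 - Real.cos θ) + Real.cos (k * (2 * θ) - θ)
          - Real.cos (k * (2 * θ) - 0) / 2 - Real.cos (k * (2 * θ) - 2 * θ) / 2 := by
    intro k
    have := term_id_aux ((k : ℝ) * θ) (((k : ℝ) - 1) * θ)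
    have e1 : (k : ℝ) * θ - ((k : ℝ) - 1) * θ = θ := by ring
    have e2 : (k : ℝ) * θ + ((k : ℝ) - 1) * θ = k * (2 * θ) - θ := by ring
    have e3 : 2 * ((k : ℝ) * θ) = k * (2 * θ) - 0 := by ring
    have e4 : 2 * (((k : ℝ) - 1) * θ) = k * (2 * θ) - 2 * θ := by ring
    rw [e1, e2, e3, e4] at this
    exact this
  rw [Finset.sum_congr rfl (fun k _ => hterm k)]
  have S1 := cos_sum_zero_aux θ θ n hz1 hzn
  have S2 := cos_sum_zero_aux θ 0 n hz1 hzn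
  have S3 := cos_sum_zero_aux θ (2 * θ) n hz1 hzn
  have hsplit : ∑ k ∈ Finset.Icc 1 n,
      ((1 - Real.cos θ) + Real.cos (k * (2 * θ) - θ)
        - Real.cos (k * (2 * θ) - 0) / 2 - Real.cos (k * (2 * θ) - 2 * θ) / 2)
      = (n : ℝ) * (1 - Real.cos θ) := by
    rw [Finset.sum_sub_distrib, Finset.sum_sub_distrib, Finset.sum_add_distrib,
      Finset.sum_const, Nat.card_Icc]
    simp only [← Finset.sum_div]
    rw [S1, S2, S3]
    simp [nsmul_eq_mul]
  rw [hsplit]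
  ring
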